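/- Let P be a set of n points in the plane and let 0 < ε₁ ≤ ε₂ ≤ ε₃ < 1 satisfy ε₁ ≥ 3/8, ε₂ ≥ 1/2, and ε₁ + ε₃ ≥ 1. Then there exist three points p₁, p₂, p₃ ∈ ℝ² such that every axis-parallel box containing more than ε_i·n points of P contains at least i of the points p₁, p₂, p₃, for each i ∈ {1,2,3}. -/

import Mathlib

/-- `B` is a compact axis-parallel box in `ℝ²`: a product of closed intervals. -/
def IsBox (B : Set (EuclideanSpace ℝ (Fin 2))) : Prop :=
  ∃ a b : Fin 2 → ℝ, B = {x | ∀ i, x i ∈ Set.Icc (a i) (b i)}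

/-- Number of points of the finite set `P` lying in the set `C`. -/
noncomputable def ptsIn (P : Finset (EuclideanSpace ℝ (Fin 2)))
    (C : Set (EuclideanSpace ℝ (Fin 2))) : ℕ :=
  ((P : Set (EuclideanSpace ℝ (Fin 2))) ∩ C).ncard

/- ### Auxiliary material -/

open Finset Classical

abbrev Pt := EuclideanSpace ℝ (Fin 2)

noncomputable def cnt (P : Finset Pt) (C : Set Pt) : ℕ :=
  (P.filter (fun p => p ∈ C)).card

theorem ptsIn_eq_cnt (P : Finset Pt) (C : Set Pt) : ptsIn P C = cnt P C := by
  rw [ptsIn, cnt]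
  rw [show ((P : Set Pt) ∩ C) = ↑(P.filter (fun p => p ∈ C)) from by ext x; simp]
  rw [Set.ncard_coe_finset]

theorem overlap {α : Type*} [DecidableEq α] (A B T : Finset α) (hA : A ⊆ T) (hB : B ⊆ T)
    (h : T.card < A.card + B.card) : (A ∩ B).Nonempty := by
  by_contra h'
  rw [Finset.not_nonempty_iff_eq_empty] at h'
  have h2 := Finset.card_union_add_card_inter A B
  rw [h', Finset.card_empty] at h2
  have := Finset.card_le_card (Finset.union_subset hA hB)
  omega

theorem triple_count {α : Type*} [DecidableEq α] (A B Q T : Finset α)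
    (hA : A ⊆ T) (hB : B ⊆ T) (hQ : Q ⊆ T)
    (hAQ : A ∩ Q = ∅) (hBQ : B ∩ Q = ∅) :
    A.card + B.card + Q.card ≤ T.card + (A ∩ B).card := by
  have h1 : ((A ∪ B) ∪ Q).card ≤ T.card :=
    Finset.card_le_card (Finset.union_subset (Finset.union_subset hA hB) hQ)
  have hd : Disjoint (A ∪ B) Q := by
    rw [Finset.disjoint_left]
    intro x hx hxQ
    rcases Finset.mem_union.1 hx with h | h
    · exact Finset.notMem_empty x (hAQ ▸ Finset.mem_inter.2 ⟨h, hxQ⟩)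
    · exact Finset.notMem_empty x (hBQ ▸ Finset.mem_inter.2 ⟨h, hxQ⟩)
  have h2 := Finset.card_union_of_disjoint hd
  have h3 := Finset.card_union_add_card_inter A B
  omega

theorem split4 {α : Type*} (P : Finset α) (p q : α → Prop) [DecidablePred p] [DecidablePred q] :
    P.card + (P.filter fun x => p x ∧ q x).card ≤
      (P.filter p).card + (P.filter q).card + (P.filter fun x => ¬ p x ∧ ¬ q x).card := by
  classical
  have hsub : P ⊆ (P.filter p ∪ P.filter q) ∪ P.filter (fun x => ¬ p x ∧ ¬ q x) := by
    intro x hx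
    by_cases hp : p x
    · exact Finset.mem_union_left _ (Finset.mem_union_left _ (Finset.mem_filter.2 ⟨hx, hp⟩))
    · by_cases hq : q x
      · exact Finset.mem_union_left _ (Finset.mem_union_right _ (Finset.mem_filter.2 ⟨hx, hq⟩))
      · exact Finset.mem_union_right _ (Finset.mem_filter.2 ⟨hx, hp, hq⟩)
  have h1 : P.card ≤ ((P.filter p ∪ P.filter q) ∪ P.filter (fun x => ¬ p x ∧ ¬ q x)).card :=
    Finset.card_le_card hsub
  have h2 := Finset.card_union_le (P.filter p ∪ P.filter q) (P.filter (fun x => ¬ p x ∧ ¬ q x))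
  have h3 := Finset.card_union_add_card_inter (P.filter p) (P.filter q)
  have h4 : P.filter p ∩ P.filter q = P.filter (fun x => p x ∧ q x) := by
    ext x; simp only [Finset.mem_inter, Finset.mem_filter]; tauto
  rw [h4] at h3
  omega

theorem split3 {α : Type*} (P : Finset α) (p q r : α → Prop) [DecidablePred p] [DecidablePred q]
    [DecidablePred r] (h : ∀ x, ¬ q x ∨ ¬ r x) :
    P.card ≤ (P.filter p).card + (P.filter fun x => ¬ p x ∧ ¬ q x).card
      + (P.filter fun x => ¬ p x ∧ ¬ r x).card := by
  classical
  have hsub : P ⊆ (P.filter p ∪ P.filter (fun x => ¬ p x ∧ ¬ q x))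
      ∪ P.filter (fun x => ¬ p x ∧ ¬ r x) := by
    intro x hx
    by_cases hp : p x
    · exact Finset.mem_union_left _ (Finset.mem_union_left _ (Finset.mem_filter.2 ⟨hx, hp⟩))
    · rcases h x with hq | hr
      · exact Finset.mem_union_left _ (Finset.mem_union_right _ (Finset.mem_filter.2 ⟨hx, hp, hq⟩))
      · exact Finset.mem_union_right _ (Finset.mem_filter.2 ⟨hx, hp, hr⟩)
  calc P.card ≤ _ := Finset.card_le_card hsub
    _ ≤ _ := le_trans (Finset.card_union_le _ _)
        (by have := Finset.card_union_le (P.filter p) (P.filter (fun x => ¬ p x ∧ ¬ q x)); omega)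

theorem cardMono {α : Type*} (P : Finset α) (p q : α → Prop) [DecidablePred p] [DecidablePred q]
    (h : ∀ x, p x → q x) : (P.filter p).card ≤ (P.filter q).card :=
  Finset.card_le_card (fun x hx => by
    rw [Finset.mem_filter] at hx ⊢; exact ⟨hx.1, h x hx.2⟩)

theorem card_filter_congr {α : Type*} (P : Finset α) (p q : α → Prop)
    [DecidablePred p] [DecidablePred q]
    (h : ∀ x, p x ↔ q x) : (P.filter p).card = (P.filter q).card := by
  congr 1
  exact Finset.filter_congr (fun x _ => h x)

theorem two_disj {α : Type*} (P : Finset α) (p q r : α → Prop) [DecidablePred p]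
    [DecidablePred q] [DecidablePred r] (h : ∀ x, ¬ (q x ∧ r x)) :
    (P.filter fun x => p x ∧ q x).card + (P.filter fun x => p x ∧ r x).card
      ≤ (P.filter p).card := by
  classical
  have hd : Disjoint (P.filter fun x => p x ∧ q x) (P.filter fun x => p x ∧ r x) := by
    rw [Finset.disjoint_left]
    intro x hx hx'
    rw [Finset.mem_filter] at hx hx'
    exact h x ⟨hx.2.2, hx'.2.2⟩
  have := Finset.card_union_of_disjoint hd
  have hsub : (P.filter fun x => p x ∧ q x) ∪ (P.filter fun x => p x ∧ r x) ⊆ P.filter p := by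
    intro x hx
    rcases Finset.mem_union.1 hx with h' | h' <;>
      · rw [Finset.mem_filter] at h' ⊢; exact ⟨h'.1, h'.2.1⟩
  have := Finset.card_le_card hsub
  omega

theorem cnt_filter_sub (P : Finset Pt) (B : Set Pt) (R : Pt → Prop)
    (h : ∀ p ∈ P, p ∈ B → R p) :
    P.filter (fun p => p ∈ B) ⊆ P.filter R := by
  intro x hx
  rw [Finset.mem_filter] at hx ⊢
  exact ⟨hx.1, h x hx.1 hx.2⟩

theorem pairInt (P : Finset Pt) (B C : Set Pt)
    (h : (P.card : ℝ) < cnt P B + cnt P C) : (B ∩ C).Nonempty := by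
  have hn : P.card < cnt P B + cnt P C := by exact_mod_cast h
  obtain ⟨x, hx⟩ := overlap (P.filter (fun p => p ∈ B)) (P.filter (fun p => p ∈ C)) P
    (Finset.filter_subset _ _) (Finset.filter_subset _ _) hn
  rw [Finset.mem_inter, Finset.mem_filter, Finset.mem_filter] at hx
  exact ⟨x, hx.1.2, hx.2.2⟩

/-- The Helly family associated to a pair of halfplane-like regions. -/
def Fam (P : Finset Pt) (ε₁ ε₂ ε₃ : ℝ) (R S : Pt → Prop) : Set (Set Pt) :=
  {B | IsBox B ∧
    ((ε₃ * P.card : ℝ) < cnt P B ∨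
     ((ε₁ * P.card : ℝ) < cnt P B ∧ ((∀ p ∈ P, p ∈ B → R p) ∨ (∀ p ∈ P, p ∈ B → S p))) ∨
     ((ε₂ * P.card : ℝ) < cnt P B ∧ ∀ C : Set Pt, IsBox C → (ε₁ * P.card : ℝ) < cnt P C →
        ((∀ p ∈ P, p ∈ C → R p) ∨ (∀ p ∈ P, p ∈ C → S p)) → (B ∩ C).Nonempty))}

theorem fam_heavy (P : Finset Pt) (ε₁ ε₂ ε₃ : ℝ) (hε₁₂ : ε₁ ≤ ε₂) (hε₂₃ : ε₂ ≤ ε₃)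
    (R S : Pt → Prop) (B : Set Pt) (hB : B ∈ Fam P ε₁ ε₂ ε₃ R S) :
    (ε₁ * P.card : ℝ) < cnt P B := by
  have h12 : (ε₁ * P.card : ℝ) ≤ ε₂ * P.card :=
    mul_le_mul_of_nonneg_right hε₁₂ (Nat.cast_nonneg _)
  have h23 : (ε₂ * P.card : ℝ) ≤ ε₃ * P.card :=
    mul_le_mul_of_nonneg_right hε₂₃ (Nat.cast_nonneg _)
  rcases hB.2 with h | ⟨h, _⟩ | ⟨h, _⟩
  · linarith
  · exact h
  · linarith

theorem fam_pairwise (P : Finset Pt) (ε₁ ε₂ ε₃ : ℝ)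
    (hε₁ : 0 < ε₁) (hε₁₂ : ε₁ ≤ ε₂) (hε₂₃ : ε₂ ≤ ε₃)
    (h₁ : ε₁ ≥ 3 / 8) (h₂ : ε₂ ≥ 1 / 2) (h₃ : ε₁ + ε₃ ≥ 1)
    (R S : Pt → Prop)
    (hRS : P.card ≤ 4 * (P.filter fun x => ¬ R x ∧ ¬ S x).card) :
    ∀ B ∈ Fam P ε₁ ε₂ ε₃ R S, ∀ C ∈ Fam P ε₁ ε₂ ε₃ R S, (B ∩ C).Nonempty := by
  intro B hB C hC
  have hn0 : (0:ℝ) ≤ (P.card:ℝ) := Nat.cast_nonneg _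
  have hgeB := fam_heavy P ε₁ ε₂ ε₃ hε₁₂ hε₂₃ R S B hB
  have hgeC := fam_heavy P ε₁ ε₂ ε₃ hε₁₂ hε₂₃ R S C hC
  have regionCase : ∀ B' C' : Set Pt,
      (ε₁ * P.card : ℝ) < cnt P B' → (ε₁ * P.card : ℝ) < cnt P C' →
      ((∀ p ∈ P, p ∈ B' → R p) ∨ (∀ p ∈ P, p ∈ B' → S p)) →
      ((∀ p ∈ P, p ∈ C' → R p) ∨ (∀ p ∈ P, p ∈ C' → S p)) →
      (B' ∩ C').Nonempty := by
    intro B' C' hB' hC' hBreg hCreg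
    classical
    set U := P.filter (fun x => R x ∨ S x) with hU
    have hUsub : ∀ D : Set Pt, ((∀ p ∈ P, p ∈ D → R p) ∨ (∀ p ∈ P, p ∈ D → S p)) →
        P.filter (fun p => p ∈ D) ⊆ U := by
      intro D hD
      rcases hD with h | h
      · exact (cnt_filter_sub P D R h).trans (by
          intro x hx; rw [Finset.mem_filter] at hx ⊢; exact ⟨hx.1, Or.inl hx.2⟩)
      · exact (cnt_filter_sub P D S h).trans (by
          intro x hx; rw [Finset.mem_filter] at hx ⊢; exact ⟨hx.1, Or.inr hx.2⟩)
    have hcompl : U.card + (P.filter fun x => ¬ R x ∧ ¬ S x).card = P.card := by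
      have h' := Finset.card_filter_add_card_filter_not (s := P)
        (p := fun x => R x ∨ S x)
      have heq : (P.filter fun a => ¬(R a ∨ S a)) = (P.filter fun x => ¬ R x ∧ ¬ S x) :=
        Finset.filter_congr (fun x _ => by tauto)
      rw [heq] at h'
      rw [hU]
      exact h'
    have hU3 : 4 * U.card ≤ 3 * P.card := by omega
    have h3n : (3:ℝ) * P.card ≤ 8 * ε₁ * P.card := by nlinarith
    have hlt : (U.card : ℝ) < cnt P B' + cnt P C' := by
      have hcast : (4 * U.card : ℝ) ≤ 3 * P.card := by exact_mod_cast hU3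
      linarith
    have hltn : U.card < cnt P B' + cnt P C' := by exact_mod_cast hlt
    obtain ⟨x, hx⟩ := overlap _ _ U (hUsub B' hBreg) (hUsub C' hCreg) hltn
    rw [Finset.mem_inter, Finset.mem_filter, Finset.mem_filter] at hx
    exact ⟨x, hx.1.2, hx.2.2⟩
  rcases hB.2 with hB3 | ⟨hB1, hBreg⟩ | ⟨hB2, hBq⟩
  · exact pairInt P B C (by nlinarith [hB3, hgeC, h₃, hn0])
  · rcases hC.2 with hC3 | ⟨hC1, hCreg⟩ | ⟨hC2, hCq⟩
    · exact pairInt P B C (by nlinarith [hC3, hgeB, h₃, hn0])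
    · exact regionCase B C hB1 hC1 hBreg hCreg
    · rw [Set.inter_comm]; exact hCq B hB.1 hB1 hBreg
  · rcases hC.2 with hC3 | ⟨hC1, hCreg⟩ | ⟨hC2, hCq⟩
    · exact pairInt P B C (by nlinarith [hC3, hB2, h₃, hε₁₂, hn0])
    · exact hBq C hC.1 hC1 hCreg
    · exact pairInt P B C (by nlinarith [hB2, hC2, h₂, hn0])

theorem helly (F : Set (Set Pt)) (hbox : ∀ B ∈ F, IsBox B)
    (hpair : ∀ B ∈ F, ∀ C ∈ F, (B ∩ C).Nonempty) :
    ∃ p : Pt, ∀ B ∈ F, p ∈ B := by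
  rcases F.eq_empty_or_nonempty with h | ⟨B₀, hB₀⟩
  · exact ⟨0, by simp [h]⟩
  choose a b hab using hbox
  have key : ∀ C (hC : C ∈ F) B (hB : B ∈ F) (i : Fin 2), a C hC i ≤ b B hB i := by
    intro C hC B hB i
    obtain ⟨x, hxC, hxB⟩ := hpair C hC B hB
    rw [hab C hC] at hxC
    rw [hab B hB] at hxB
    exact le_trans (hxC i).1 (hxB i).2
  set S : Fin 2 → Set ℝ := fun i => {t | ∃ B, ∃ hB : B ∈ F, a B hB i = t} with hS
  have hSne : ∀ i, (S i).Nonempty := fun i => ⟨a B₀ hB₀ i, B₀, hB₀, rfl⟩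
  have hSbdd : ∀ i, BddAbove (S i) := by
    intro i
    refine ⟨b B₀ hB₀ i, ?_⟩
    rintro t ⟨C, hC, rfl⟩
    exact key C hC B₀ hB₀ i
  refine ⟨WithLp.toLp 2 (fun i => sSup (S i) : Fin 2 → ℝ), ?_⟩
  intro B hB
  rw [hab B hB]
  intro i
  constructor
  · exact le_csSup (hSbdd i) ⟨B, hB, rfl⟩
  · refine csSup_le (hSne i) ?_
    rintro t ⟨C, hC, rfl⟩
    exact key C hC B hB i

theorem median (P : Finset Pt) (f : Pt → ℝ) :
    ∃ m : ℝ, 2 * (P.filter (fun p => f p < m)).card ≤ P.card ∧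
             2 * (P.filter (fun p => m < f p)).card ≤ P.card := by
  classical
  rcases P.eq_empty_or_nonempty with h | hne
  · exact ⟨0, by simp [h]⟩
  set V := P.image f with hV
  have hVne : V.Nonempty := hne.image f
  set S := V.filter (fun t => 2 * (P.filter fun p => f p < t).card ≤ P.card) with hSdef
  have hSne : S.Nonempty := by
    refine ⟨V.min' hVne, Finset.mem_filter.2 ⟨V.min'_mem hVne, ?_⟩⟩
    have : P.filter (fun p => f p < V.min' hVne) = ∅ := by
      rw [Finset.filter_eq_empty_iff]
      intro p hp
      exact not_lt.2 (V.min'_le (f p) (Finset.mem_image_of_mem f hp))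
    rw [this]; simp
  refine ⟨S.max' hSne, (Finset.mem_filter.1 (S.max'_mem hSne)).2, ?_⟩
  set m := S.max' hSne with hm
  by_contra hcon
  push_neg at hcon
  set T := P.filter (fun p => m < f p) with hT
  have hTne : T.Nonempty := by
    rw [← Finset.card_pos]; omega
  set m' := (T.image f).min' (hTne.image f) with hm'
  obtain ⟨p₀, hp₀T, hp₀⟩ := Finset.mem_image.1 ((T.image f).min'_mem (hTne.image f))
  have hm'V : m' ∈ V := by
    rw [hm', ← hp₀]
    exact Finset.mem_image_of_mem f (Finset.mem_of_mem_filter p₀ hp₀T)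
  have hmm' : m < m' := by
    rw [hm', ← hp₀]; exact (Finset.mem_filter.1 hp₀T).2
  have hsubset : P.filter (fun p => f p < m') ⊆ P.filter (fun p => ¬ m < f p) := by
    intro p hp
    rw [Finset.mem_filter] at hp ⊢
    refine ⟨hp.1, fun hmp => ?_⟩
    have : m' ≤ f p := (T.image f).min'_le (f p)
      (Finset.mem_image_of_mem f (Finset.mem_filter.2 ⟨hp.1, hmp⟩))
    exact absurd hp.2 (not_lt.2 this)
  have hcard : (P.filter (fun p => f p < m')).card ≤ P.card - T.card := by
    have := Finset.card_filter_add_card_filter_not (s := P) (p := fun p => m < f p)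
    have h2 := Finset.card_le_card hsubset
    have haT : (P.filter (fun p => m < f p)).card = T.card := by rw [hT]
    omega
  have hm'S : m' ∈ S := by
    rw [hSdef, Finset.mem_filter]
    exact ⟨hm'V, by omega⟩
  have := S.le_max' m' hm'S
  rw [← hm] at this
  exact absurd hmm' (not_lt.2 this)


theorem dicho (n la lb lc ld qse qnw qne qsw onw ose osw one : ℕ)
    (hla : 2 * la ≤ n) (hlb : 2 * lb ≤ n) (hlc : 2 * lc ≤ n) (hld : 2 * ld ≤ n)
    (s1 : n + onw ≤ la + lb + qse) (s2 : n + ose ≤ lc + ld + qnw)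
    (s3 : n + osw ≤ la + ld + qne) (s4 : n + one ≤ lb + lc + qsw)
    (t1 : n ≤ la + qse + qne) (t2 : n ≤ lc + qnw + qsw)
    (t3 : n ≤ lb + qse + qsw) (t4 : n ≤ ld + qne + qnw)
    (u1 : onw + osw ≤ la) (u2 : one + ose ≤ lc)
    (u3 : osw + ose ≤ ld) (u4 : onw + one ≤ lb)
    (m1 : osw ≤ qsw) (m2 : one ≤ qne) (m3 : onw ≤ qnw) (m4 : ose ≤ qse) :
    (n ≤ 4 * qse ∧ n ≤ 4 * qnw ∧ 4 * osw ≤ n ∧ 4 * one ≤ n) ∨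
    (n ≤ 4 * qne ∧ n ≤ 4 * qsw ∧ 4 * onw ≤ n ∧ 4 * ose ≤ n) := by
  omega

theorem construct (P : Finset Pt) (ε₁ ε₂ ε₃ : ℝ)
    (hε₁ : 0 < ε₁) (hε₁₂ : ε₁ ≤ ε₂) (hε₂₃ : ε₂ ≤ ε₃)
    (h₁ : ε₁ ≥ 3 / 8) (h₂ : ε₂ ≥ 1 / 2) (h₃ : ε₁ + ε₃ ≥ 1)
    (p₁ : Pt) (Ra Rb Rc Rd : Pt → Prop)
    (hac : ∀ p, ¬(Ra p ∧ Rc p)) (hbd : ∀ p, ¬(Rb p ∧ Rd p))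
    (hab : P.card ≤ 4 * (P.filter fun x => ¬ Ra x ∧ ¬ Rb x).card)
    (hcd : P.card ≤ 4 * (P.filter fun x => ¬ Rc x ∧ ¬ Rd x).card)
    (had : 4 * (P.filter fun x => Ra x ∧ Rd x).card ≤ P.card)
    (hbc : 4 * (P.filter fun x => Rb x ∧ Rc x).card ≤ P.card)
    (hp₁ : ∀ B : Set Pt, IsBox B → (P.card : ℝ) < 2 * cnt P B → p₁ ∈ B)
    (hcover : ∀ B : Set Pt, IsBox B → p₁ ∉ B →
        (∀ p ∈ P, p ∈ B → Ra p) ∨ (∀ p ∈ P, p ∈ B → Rb p) ∨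
        (∀ p ∈ P, p ∈ B → Rc p) ∨ (∀ p ∈ P, p ∈ B → Rd p)) :
    ∃ p₂ p₃ : Pt,
      (∀ B : Set Pt, IsBox B → (cnt P B : ℝ) > ε₁ * P.card → p₁ ∈ B ∨ p₂ ∈ B ∨ p₃ ∈ B) ∧
      (∀ B : Set Pt, IsBox B → (cnt P B : ℝ) > ε₂ * P.card →
          (p₁ ∈ B ∧ p₂ ∈ B) ∨ (p₁ ∈ B ∧ p₃ ∈ B) ∨ (p₂ ∈ B ∧ p₃ ∈ B)) ∧
      (∀ B : Set Pt, IsBox B → (cnt P B : ℝ) > ε₃ * P.card → p₁ ∈ B ∧ p₂ ∈ B ∧ p₃ ∈ B) := by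
  have hn0 : (0:ℝ) ≤ (P.card:ℝ) := Nat.cast_nonneg _
  obtain ⟨p₂, hp₂⟩ := helly (Fam P ε₁ ε₂ ε₃ Ra Rb) (fun B hB => hB.1)
    (fam_pairwise P ε₁ ε₂ ε₃ hε₁ hε₁₂ hε₂₃ h₁ h₂ h₃ Ra Rb hab)
  obtain ⟨p₃, hp₃⟩ := helly (Fam P ε₁ ε₂ ε₃ Rc Rd) (fun B hB => hB.1)
    (fam_pairwise P ε₁ ε₂ ε₃ hε₁ hε₁₂ hε₂₃ h₁ h₂ h₃ Rc Rd hcd)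
  have hhalf : ∀ B : Set Pt, IsBox B → (cnt P B : ℝ) > ε₂ * P.card → p₁ ∈ B := by
    intro B hBbox hBcnt
    apply hp₁ B hBbox
    nlinarith [hBcnt, h₂, hn0]
  have hsecond : ∀ B : Set Pt, IsBox B → (cnt P B : ℝ) > ε₂ * P.card →
      p₂ ∈ B ∨ p₃ ∈ B := by
    intro B hBbox hBcnt
    by_cases hQ2 : ∀ C : Set Pt, IsBox C → (ε₁ * P.card : ℝ) < cnt P C →
        ((∀ p ∈ P, p ∈ C → Ra p) ∨ (∀ p ∈ P, p ∈ C → Rb p)) → (B ∩ C).Nonempty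
    · exact Or.inl (hp₂ B ⟨hBbox, Or.inr (Or.inr ⟨hBcnt, hQ2⟩)⟩)
    by_cases hQ3 : ∀ C : Set Pt, IsBox C → (ε₁ * P.card : ℝ) < cnt P C →
        ((∀ p ∈ P, p ∈ C → Rc p) ∨ (∀ p ∈ P, p ∈ C → Rd p)) → (B ∩ C).Nonempty
    · exact Or.inr (hp₃ B ⟨hBbox, Or.inr (Or.inr ⟨hBcnt, hQ3⟩)⟩)
    exfalso
    push_neg at hQ2 hQ3
    obtain ⟨C₁, hC₁box, hC₁cnt, hC₁reg, hC₁dis⟩ := hQ2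
    obtain ⟨C₂, hC₂box, hC₂cnt, hC₂reg, hC₂dis⟩ := hQ3
    classical
    set A' := P.filter (fun p => p ∈ C₁) with hA'
    set B' := P.filter (fun p => p ∈ C₂) with hB'
    set Q' := P.filter (fun p => p ∈ B) with hQ'
    have hAQ : A' ∩ Q' = ∅ := by
      rw [Finset.eq_empty_iff_forall_notMem]
      intro x hx
      rw [Finset.mem_inter, Finset.mem_filter, Finset.mem_filter] at hx
      have : x ∈ B ∩ C₁ := ⟨hx.2.2, hx.1.2⟩
      rw [hC₁dis] at this
      exact this
    have hBQ : B' ∩ Q' = ∅ := by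
      rw [Finset.eq_empty_iff_forall_notMem]
      intro x hx
      rw [Finset.mem_inter, Finset.mem_filter, Finset.mem_filter] at hx
      have : x ∈ B ∩ C₂ := ⟨hx.2.2, hx.1.2⟩
      rw [hC₂dis] at this
      exact this
    have htc := triple_count A' B' Q' P (Finset.filter_subset _ _) (Finset.filter_subset _ _)
      (Finset.filter_subset _ _) hAQ hBQ
    have hbig : (P.card : ℝ) < 4 * (A' ∩ B').card := by
      have hA'c : (A'.card : ℝ) = cnt P C₁ := by rw [hA']; rfl
      have hB'c : (B'.card : ℝ) = cnt P C₂ := by rw [hB']; rfl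
      have hQ'c : (Q'.card : ℝ) = cnt P B := by rw [hQ']; rfl
      have htcR : (A'.card : ℝ) + B'.card + Q'.card ≤ P.card + ((A' ∩ B').card : ℝ) := by
        exact_mod_cast htc
      rw [hA'c, hB'c, hQ'c] at htcR
      nlinarith [hC₁cnt, hC₂cnt, hBcnt, h₁, h₂, hn0]
    have hbign : P.card < 4 * (A' ∩ B').card := by exact_mod_cast hbig
    have hsub : ∀ (R S : Pt → Prop), (∀ p ∈ P, p ∈ C₁ → R p) → (∀ p ∈ P, p ∈ C₂ → S p) →
        (A' ∩ B') ⊆ P.filter (fun x => R x ∧ S x) := by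
      intro R S hR hS x hx
      rw [Finset.mem_inter, hA', hB', Finset.mem_filter, Finset.mem_filter] at hx
      rw [Finset.mem_filter]
      exact ⟨hx.1.1, hR x hx.1.1 hx.1.2, hS x hx.2.1 hx.2.2⟩
    rcases hC₁reg with hR1 | hR1 <;> rcases hC₂reg with hR2 | hR2
    · have h0 : (P.filter (fun x => Ra x ∧ Rc x)) = ∅ := by
        rw [Finset.filter_eq_empty_iff]; intro x _; exact hac x
      have := Finset.card_le_card (hsub Ra Rc hR1 hR2)
      rw [h0] at this
      simp only [Finset.card_empty] at this
      omega
    · have := Finset.card_le_card (hsub Ra Rd hR1 hR2)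
      omega
    · have := Finset.card_le_card (hsub Rb Rc hR1 hR2)
      omega
    · have h0 : (P.filter (fun x => Rb x ∧ Rd x)) = ∅ := by
        rw [Finset.filter_eq_empty_iff]; intro x _; exact hbd x
      have := Finset.card_le_card (hsub Rb Rd hR1 hR2)
      rw [h0] at this
      simp only [Finset.card_empty] at this
      omega
  refine ⟨p₂, p₃, ?_, ?_, ?_⟩
  · intro B hBbox hBcnt
    by_cases hmem : p₁ ∈ B
    · exact Or.inl hmem
    rcases hcover B hBbox hmem with h | h | h | h
    · exact Or.inr (Or.inl (hp₂ B ⟨hBbox, Or.inr (Or.inl ⟨hBcnt, Or.inl h⟩)⟩))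
    · exact Or.inr (Or.inl (hp₂ B ⟨hBbox, Or.inr (Or.inl ⟨hBcnt, Or.inr h⟩)⟩))
    · exact Or.inr (Or.inr (hp₃ B ⟨hBbox, Or.inr (Or.inl ⟨hBcnt, Or.inl h⟩)⟩))
    · exact Or.inr (Or.inr (hp₃ B ⟨hBbox, Or.inr (Or.inl ⟨hBcnt, Or.inr h⟩)⟩))
  · intro B hBbox hBcnt
    have h1 := hhalf B hBbox hBcnt
    rcases hsecond B hBbox hBcnt with h | h
    · exact Or.inl ⟨h1, h⟩
    · exact Or.inr (Or.inl ⟨h1, h⟩)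
  · intro B hBbox hBcnt
    have hB2 : (cnt P B : ℝ) > ε₂ * P.card := by nlinarith [hε₂₃, hn0]
    refine ⟨hhalf B hBbox hB2, ?_, ?_⟩
    · exact hp₂ B ⟨hBbox, Or.inl hBcnt⟩
    · exact hp₃ B ⟨hBbox, Or.inl hBcnt⟩

/-- weighted ε-nets of size 3 for axis-parallel boxes in the plane:
if `ε₁ ≥ 3/8`, `ε₂ ≥ 1/2` and `ε₁ + ε₃ ≥ 1` then there are three points such that
every box with more than `ε_i·n` points of `P` contains at least `i` of them. -/
theorem weighted_net_boxes_three (P : Finset (EuclideanSpace ℝ (Fin 2)))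
    (n : ℕ) (hn : P.card = n)
    (ε₁ ε₂ ε₃ : ℝ) (hε₁ : 0 < ε₁) (hε₁₂ : ε₁ ≤ ε₂) (hε₂₃ : ε₂ ≤ ε₃) (hε₃ : ε₃ < 1)
    (h₁ : ε₁ ≥ 3 / 8) (h₂ : ε₂ ≥ 1 / 2) (h₃ : ε₁ + ε₃ ≥ 1) :
    ∃ p₁ p₂ p₃ : EuclideanSpace ℝ (Fin 2),
      (∀ B : Set (EuclideanSpace ℝ (Fin 2)), IsBox B →
        (ptsIn P B : ℝ) > ε₁ * n → p₁ ∈ B ∨ p₂ ∈ B ∨ p₃ ∈ B) ∧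
      (∀ B : Set (EuclideanSpace ℝ (Fin 2)), IsBox B →
        (ptsIn P B : ℝ) > ε₂ * n →
          (p₁ ∈ B ∧ p₂ ∈ B) ∨ (p₁ ∈ B ∧ p₃ ∈ B) ∨ (p₂ ∈ B ∧ p₃ ∈ B)) ∧
      (∀ B : Set (EuclideanSpace ℝ (Fin 2)), IsBox B →
        (ptsIn P B : ℝ) > ε₃ * n → p₁ ∈ B ∧ p₂ ∈ B ∧ p₃ ∈ B) := by
  classical
  subst hn
  obtain ⟨m₁, hm₁l', hm₁r'⟩ := median P (fun p => p 0)
  obtain ⟨m₂, hm₂l', hm₂r'⟩ := median P (fun p => p 1)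
  have hla : 2 * (P.filter fun p => p 0 < m₁).card ≤ P.card := hm₁l'
  have hlc : 2 * (P.filter fun p => m₁ < p 0).card ≤ P.card := hm₁r'
  have hld : 2 * (P.filter fun p => p 1 < m₂).card ≤ P.card := hm₂l'
  have hlb : 2 * (P.filter fun p => m₂ < p 1).card ≤ P.card := hm₂r'
  set p₁ : Pt := WithLp.toLp 2 (fun i => if i = 0 then m₁ else m₂ : Fin 2 → ℝ) with hp₁def
  have hp₁0 : p₁ 0 = m₁ := by rw [hp₁def]; simp
  have hp₁1 : p₁ 1 = m₂ := by rw [hp₁def]; simp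
  -- p₁ belongs to every box with more than half the points
  have hp₁mem : ∀ B : Set Pt, IsBox B → (P.card : ℝ) < 2 * cnt P B → p₁ ∈ B := by
    rintro B ⟨a, b, rfl⟩ hcnt
    have hcc : ∀ (R : Pt → Prop), (∀ p ∈ P, (∀ i, p i ∈ Set.Icc (a i) (b i)) → R p) →
        2 * (P.filter R).card ≤ P.card → False := by
      intro R hsubR hR
      have h1 : cnt P {x : Pt | ∀ i, x i ∈ Set.Icc (a i) (b i)} ≤ (P.filter R).card :=
        Finset.card_le_card (cnt_filter_sub P _ R hsubR)
      have : (2 * cnt P {x : Pt | ∀ i, x i ∈ Set.Icc (a i) (b i)} : ℝ) ≤ P.card := by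
        exact_mod_cast le_trans (Nat.mul_le_mul_left 2 h1) hR
      linarith
    intro i
    fin_cases i
    · rw [Set.mem_Icc]
      constructor
      · by_contra hlt
        push_neg at hlt
        have hlt2 : m₁ < a 0 := by simpa [hp₁def] using hlt
        exact hcc (fun p => m₁ < p 0)
          (fun p _ hpB => lt_of_lt_of_le hlt2 ((hpB 0).1)) hlc
      · by_contra hlt
        push_neg at hlt
        have hlt2 : b 0 < m₁ := by simpa [hp₁def] using hlt
        exact hcc (fun p => p 0 < m₁)
          (fun p _ hpB => lt_of_le_of_lt ((hpB 0).2) hlt2) hla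
    · rw [Set.mem_Icc]
      constructor
      · by_contra hlt
        push_neg at hlt
        have hlt2 : m₂ < a 1 := by simpa [hp₁def] using hlt
        exact hcc (fun p => m₂ < p 1)
          (fun p _ hpB => lt_of_lt_of_le hlt2 ((hpB 1).1)) hlb
      · by_contra hlt
        push_neg at hlt
        have hlt2 : b 1 < m₂ := by simpa [hp₁def] using hlt
        exact hcc (fun p => p 1 < m₂)
          (fun p _ hpB => lt_of_le_of_lt ((hpB 1).2) hlt2) hld
  -- any box avoiding p₁ lies in one of the four open halfplanes
  have hcover4 : ∀ B : Set Pt, IsBox B → p₁ ∉ B →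
      (∀ p ∈ P, p ∈ B → p 0 < m₁) ∨ (∀ p ∈ P, p ∈ B → m₂ < p 1) ∨
      (∀ p ∈ P, p ∈ B → m₁ < p 0) ∨ (∀ p ∈ P, p ∈ B → p 1 < m₂) := by
    rintro B ⟨a, b, rfl⟩ hnot
    simp only [Set.mem_setOf_eq, not_forall] at hnot
    obtain ⟨i, hi⟩ := hnot
    rw [Set.mem_Icc, not_and_or, not_le, not_le] at hi
    fin_cases i
    · have hi2 : m₁ < a 0 ∨ b 0 < m₁ := by simpa [hp₁def] using hi
      rcases hi2 with h | h
      · refine Or.inr (Or.inr (Or.inl ?_))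
        intro p _ hpB
        exact lt_of_lt_of_le h ((hpB 0).1)
      · refine Or.inl ?_
        intro p _ hpB
        exact lt_of_le_of_lt ((hpB 0).2) h
    · have hi2 : m₂ < a 1 ∨ b 1 < m₂ := by simpa [hp₁def] using hi
      rcases hi2 with h | h
      · refine Or.inr (Or.inl ?_)
        intro p _ hpB
        exact lt_of_lt_of_le h ((hpB 1).1)
      · refine Or.inr (Or.inr (Or.inr ?_))
        intro p _ hpB
        exact lt_of_le_of_lt ((hpB 1).2) h
  -- quadrant-count dichotomy
  have s1 : P.card + (P.filter fun x : Pt => x 0 < m₁ ∧ m₂ < x 1).card ≤ (P.filter fun x : Pt => x 0 < m₁).card + (P.filter fun x : Pt => m₂ < x 1).card + (P.filter fun x : Pt => ¬ x 0 < m₁ ∧ ¬ m₂ < x 1).card :=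
    split4 P _ _
  have s2 : P.card + (P.filter fun x : Pt => m₁ < x 0 ∧ x 1 < m₂).card ≤ (P.filter fun x : Pt => m₁ < x 0).card + (P.filter fun x : Pt => x 1 < m₂).card + (P.filter fun x : Pt => ¬ m₁ < x 0 ∧ ¬ x 1 < m₂).card :=
    split4 P _ _
  have s3 : P.card + (P.filter fun x : Pt => x 0 < m₁ ∧ x 1 < m₂).card ≤ (P.filter fun x : Pt => x 0 < m₁).card + (P.filter fun x : Pt => x 1 < m₂).card + (P.filter fun x : Pt => ¬ x 0 < m₁ ∧ ¬ x 1 < m₂).card :=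
    split4 P _ _
  have s4 : P.card + (P.filter fun x : Pt => m₂ < x 1 ∧ m₁ < x 0).card ≤ (P.filter fun x : Pt => m₂ < x 1).card + (P.filter fun x : Pt => m₁ < x 0).card + (P.filter fun x : Pt => ¬ m₂ < x 1 ∧ ¬ m₁ < x 0).card :=
    split4 P _ _
  have t1 : P.card ≤ (P.filter fun x : Pt => x 0 < m₁).card + (P.filter fun x : Pt => ¬ x 0 < m₁ ∧ ¬ m₂ < x 1).card + (P.filter fun x : Pt => ¬ x 0 < m₁ ∧ ¬ x 1 < m₂).card :=
    split3 P _ _ _ (fun x => by by_cases h : m₂ < x 1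
                                · exact Or.inr (by simp; linarith)
                                · exact Or.inl h)
  have t2 : P.card ≤ (P.filter fun x : Pt => m₁ < x 0).card + (P.filter fun x : Pt => ¬ m₁ < x 0 ∧ ¬ x 1 < m₂).card + (P.filter fun x : Pt => ¬ m₁ < x 0 ∧ ¬ m₂ < x 1).card :=
    split3 P _ _ _ (fun x => by by_cases h : x 1 < m₂
                                · exact Or.inr (by simp; linarith)
                                · exact Or.inl h)
  have t3 : P.card ≤ (P.filter fun x : Pt => m₂ < x 1).card + (P.filter fun x : Pt => ¬ m₂ < x 1 ∧ ¬ x 0 < m₁).card + (P.filter fun x : Pt => ¬ m₂ < x 1 ∧ ¬ m₁ < x 0).card :=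
    split3 P _ _ _ (fun x => by by_cases h : x 0 < m₁
                                · exact Or.inr (by simp; linarith)
                                · exact Or.inl h)
  have t4 : P.card ≤ (P.filter fun x : Pt => x 1 < m₂).card + (P.filter fun x : Pt => ¬ x 1 < m₂ ∧ ¬ x 0 < m₁).card + (P.filter fun x : Pt => ¬ x 1 < m₂ ∧ ¬ m₁ < x 0).card :=
    split3 P _ _ _ (fun x => by by_cases h : x 0 < m₁
                                · exact Or.inr (by simp; linarith)
                                · exact Or.inl h)
  have u1 : (P.filter fun x : Pt => x 0 < m₁ ∧ m₂ < x 1).card + (P.filter fun x : Pt => x 0 < m₁ ∧ x 1 < m₂).card ≤ (P.filter fun x : Pt => x 0 < m₁).card :=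
    two_disj P _ _ _ (fun x hx => by linarith [hx.1, hx.2])
  have u2 : (P.filter fun x : Pt => m₁ < x 0 ∧ m₂ < x 1).card + (P.filter fun x : Pt => m₁ < x 0 ∧ x 1 < m₂).card ≤ (P.filter fun x : Pt => m₁ < x 0).card :=
    two_disj P _ _ _ (fun x hx => by linarith [hx.1, hx.2])
  have u3 : (P.filter fun x : Pt => x 1 < m₂ ∧ x 0 < m₁).card + (P.filter fun x : Pt => x 1 < m₂ ∧ m₁ < x 0).card ≤ (P.filter fun x : Pt => x 1 < m₂).card :=
    two_disj P _ _ _ (fun x hx => by linarith [hx.1, hx.2])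
  have u4 : (P.filter fun x : Pt => m₂ < x 1 ∧ x 0 < m₁).card + (P.filter fun x : Pt => m₂ < x 1 ∧ m₁ < x 0).card ≤ (P.filter fun x : Pt => m₂ < x 1).card :=
    two_disj P _ _ _ (fun x hx => by linarith [hx.1, hx.2])
  have m1 : (P.filter fun x : Pt => x 0 < m₁ ∧ x 1 < m₂).card ≤ (P.filter fun x : Pt => ¬ m₁ < x 0 ∧ ¬ m₂ < x 1).card :=
    cardMono P _ _ (fun x hx => ⟨by linarith [hx.1], by linarith [hx.2]⟩)
  have m2 : (P.filter fun x : Pt => m₂ < x 1 ∧ m₁ < x 0).card ≤ (P.filter fun x : Pt => ¬ x 0 < m₁ ∧ ¬ x 1 < m₂).card :=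
    cardMono P _ _ (fun x hx => ⟨by linarith [hx.2], by linarith [hx.1]⟩)
  have m3 : (P.filter fun x : Pt => x 0 < m₁ ∧ m₂ < x 1).card ≤ (P.filter fun x : Pt => ¬ m₁ < x 0 ∧ ¬ x 1 < m₂).card :=
    cardMono P _ _ (fun x hx => ⟨by linarith [hx.1], by linarith [hx.2]⟩)
  have m4 : (P.filter fun x : Pt => m₁ < x 0 ∧ x 1 < m₂).card ≤ (P.filter fun x : Pt => ¬ x 0 < m₁ ∧ ¬ m₂ < x 1).card :=
    cardMono P _ _ (fun x hx => ⟨by linarith [hx.1], by linarith [hx.2]⟩)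
  have e1 : (P.filter fun x : Pt => ¬ m₂ < x 1 ∧ ¬ x 0 < m₁).card = (P.filter fun x : Pt => ¬ x 0 < m₁ ∧ ¬ m₂ < x 1).card :=
    card_filter_congr P _ _ (fun x => and_comm)
  have e2 : (P.filter fun x : Pt => ¬ m₂ < x 1 ∧ ¬ m₁ < x 0).card = (P.filter fun x : Pt => ¬ m₁ < x 0 ∧ ¬ m₂ < x 1).card :=
    card_filter_congr P _ _ (fun x => and_comm)
  have e3 : (P.filter fun x : Pt => ¬ x 1 < m₂ ∧ ¬ x 0 < m₁).card = (P.filter fun x : Pt => ¬ x 0 < m₁ ∧ ¬ x 1 < m₂).card :=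
    card_filter_congr P _ _ (fun x => and_comm)
  have e4 : (P.filter fun x : Pt => ¬ x 1 < m₂ ∧ ¬ m₁ < x 0).card = (P.filter fun x : Pt => ¬ m₁ < x 0 ∧ ¬ x 1 < m₂).card :=
    card_filter_congr P _ _ (fun x => and_comm)
  have e5 : (P.filter fun x : Pt => x 1 < m₂ ∧ m₁ < x 0).card = (P.filter fun x : Pt => m₁ < x 0 ∧ x 1 < m₂).card :=
    card_filter_congr P _ _ (fun x => and_comm)
  have e6 : (P.filter fun x : Pt => x 1 < m₂ ∧ x 0 < m₁).card = (P.filter fun x : Pt => x 0 < m₁ ∧ x 1 < m₂).card :=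
    card_filter_congr P _ _ (fun x => and_comm)
  have e7 : (P.filter fun x : Pt => m₂ < x 1 ∧ x 0 < m₁).card = (P.filter fun x : Pt => x 0 < m₁ ∧ m₂ < x 1).card :=
    card_filter_congr P _ _ (fun x => and_comm)
  have e8 : (P.filter fun x : Pt => m₁ < x 0 ∧ m₂ < x 1).card = (P.filter fun x : Pt => m₂ < x 1 ∧ m₁ < x 0).card :=
    card_filter_congr P _ _ (fun x => and_comm)
  rw [e2] at s4
  rw [e1, e2] at t3
  rw [e3, e4] at t4
  rw [e8] at u2
  rw [e6, e5] at u3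
  rw [e7] at u4
  have dichotomy :
      (P.card ≤ 4 * (P.filter fun x : Pt => ¬ x 0 < m₁ ∧ ¬ m₂ < x 1).card ∧
       P.card ≤ 4 * (P.filter fun x : Pt => ¬ m₁ < x 0 ∧ ¬ x 1 < m₂).card ∧
       4 * (P.filter fun x : Pt => x 0 < m₁ ∧ x 1 < m₂).card ≤ P.card ∧
       4 * (P.filter fun x : Pt => m₂ < x 1 ∧ m₁ < x 0).card ≤ P.card) ∨
      (P.card ≤ 4 * (P.filter fun x : Pt => ¬ x 0 < m₁ ∧ ¬ x 1 < m₂).card ∧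
       P.card ≤ 4 * (P.filter fun x : Pt => ¬ m₁ < x 0 ∧ ¬ m₂ < x 1).card ∧
       4 * (P.filter fun x : Pt => x 0 < m₁ ∧ m₂ < x 1).card ≤ P.card ∧
       4 * (P.filter fun x : Pt => m₁ < x 0 ∧ x 1 < m₂).card ≤ P.card) :=
    dicho P.card _ _ _ _ _ _ _ _ _ _ _ _ hla hlb hlc hld s1 s2 s3 s4 t1 t2 t3 t4
      u1 u2 u3 u4 m1 m2 m3 m4
  have hconv : ∀ (q₁ q₂ q₃ : Pt),
      ((∀ B : Set Pt, IsBox B → (cnt P B : ℝ) > ε₁ * P.card → q₁ ∈ B ∨ q₂ ∈ B ∨ q₃ ∈ B) ∧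
       (∀ B : Set Pt, IsBox B → (cnt P B : ℝ) > ε₂ * P.card →
          (q₁ ∈ B ∧ q₂ ∈ B) ∨ (q₁ ∈ B ∧ q₃ ∈ B) ∨ (q₂ ∈ B ∧ q₃ ∈ B)) ∧
       (∀ B : Set Pt, IsBox B → (cnt P B : ℝ) > ε₃ * P.card → q₁ ∈ B ∧ q₂ ∈ B ∧ q₃ ∈ B)) →
      (∃ p₁ p₂ p₃ : Pt,
        (∀ B : Set Pt, IsBox B → (ptsIn P B : ℝ) > ε₁ * P.card → p₁ ∈ B ∨ p₂ ∈ B ∨ p₃ ∈ B) ∧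
        (∀ B : Set Pt, IsBox B → (ptsIn P B : ℝ) > ε₂ * P.card →
          (p₁ ∈ B ∧ p₂ ∈ B) ∨ (p₁ ∈ B ∧ p₃ ∈ B) ∨ (p₂ ∈ B ∧ p₃ ∈ B)) ∧
        (∀ B : Set Pt, IsBox B → (ptsIn P B : ℝ) > ε₃ * P.card → p₁ ∈ B ∧ p₂ ∈ B ∧ p₃ ∈ B)) := by
    intro q₁ q₂ q₃ ⟨c1, c2, c3⟩
    refine ⟨q₁, q₂, q₃, fun B hb hc => c1 B hb ?_, fun B hb hc => c2 B hb ?_,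
      fun B hb hc => c3 B hb ?_⟩ <;> rwa [ptsIn_eq_cnt] at hc
  rcases dichotomy with ⟨d1, d2, d3, d4⟩ | ⟨d1, d2, d3, d4⟩
  · -- pairing NW-SE : family₂ regions (W, N), family₃ regions (E, S)
    obtain ⟨p₂, p₃, c⟩ := construct P ε₁ ε₂ ε₃ hε₁ hε₁₂ hε₂₃ h₁ h₂ h₃ p₁
      (fun p => p 0 < m₁) (fun p => m₂ < p 1) (fun p => m₁ < p 0) (fun p => p 1 < m₂)
      (fun p hp => by linarith [hp.1, hp.2]) (fun p hp => by linarith [hp.1, hp.2])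
      d1 d2 d3 d4 hp₁mem
      hcover4
    exact hconv p₁ p₂ p₃ c
  · -- pairing NE-SW : family₂ regions (W, S), family₃ regions (E, N)
    obtain ⟨p₂, p₃, c⟩ := construct P ε₁ ε₂ ε₃ hε₁ hε₁₂ hε₂₃ h₁ h₂ h₃ p₁
      (fun p => p 0 < m₁) (fun p => p 1 < m₂) (fun p => m₁ < p 0) (fun p => m₂ < p 1)
      (fun p hp => by linarith [hp.1, hp.2]) (fun p hp => by linarith [hp.1, hp.2])
      d1 d2 d3 (by rw [e5]; exact d4) hp₁mem
      (fun B hb hnb => by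
        rcases hcover4 B hb hnb with h | h | h | h
        · exact Or.inl h
        · exact Or.inr (Or.inr (Or.inr h))
        · exact Or.inr (Or.inr (Or.inl h))
        · exact Or.inr (Or.inl h))
    exact hconv p₁ p₂ p₃ c
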